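/- Let I be an SMTI instance with men m_1, …, m_n and women w_1, …, w_n (placed top to bottom in index order) in which each man's preference list contains at most one woman, let E_I be the set of acceptable pairs (m, w) with m a first choice of w, and let M* be a weak-SSNM of I. Suppose the greedy procedure (processing women w_1, …, w_n in order, assigning each woman with nonempty list the smallest-indexed man m_j with (m_j, w_i) ∈ E_I such that the current set remains a noncrossing matching) has successfully processed women w_1, …, w_{k−1}, producing the partial matching M̄. Then for each i with 1 ≤ i ≤ k − 1: w_i is single in M* if and only if w_i is single in M̄, and if M*(w_i) = m_p and M̄(w_i) = m_q then q ≤ p. -/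
import Mathlib


open scoped Classical

/-- An SMTI instance: men of type `Mty`, women of type `Wty`.
`mpref m w = some r` means `w` appears on `m`'s preference list with rank `r`
(smaller rank = more preferred; equal ranks = tied); `none` means `w` is not on `m`'s list.
Similarly for `wpref`.  A pair is acceptable when each lists the other. -/
structure SMTI (Mty : Type) (Wty : Type) where
  mpref : Mty → Wty → Option ℕ
  wpref : Wty → Mty → Option ℕ

namespace SMTI

variable {Mty Wty : Type}

/-- Rank of an optional preference-list entry: `⊤` for an absent entry
(so that being single / unacceptable is worse than any listed partner). -/
def rk (o : Option ℕ) : ℕ∞ := o.elim ⊤ (fun r => (r : ℕ∞))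

/-- `(m, w)` is an acceptable pair. -/
def Acc (I : SMTI Mty Wty) (m : Mty) (w : Wty) : Prop :=
  (I.mpref m w).isSome ∧ (I.wpref w m).isSome

/-- `M` is a matching: a set of acceptable pairs in which each person appears at most once. -/
def IsMatching (I : SMTI Mty Wty) (M : Finset (Mty × Wty)) : Prop :=
  (∀ p ∈ M, I.Acc p.1 p.2) ∧
  (∀ p ∈ M, ∀ q ∈ M, (p.1 = q.1 ∨ p.2 = q.2) → p = q)

/-- Two pairs cross iff one pair's man is above the other pair's man
while its woman is below the other pair's woman. -/
def Crossing [Preorder Mty] [Preorder Wty] (p q : Mty × Wty) : Prop :=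
  (p.1 < q.1 ∧ q.2 < p.2) ∨ (q.1 < p.1 ∧ p.2 < q.2)

/-- A set of pairs is noncrossing if no two of its pairs cross. -/
def Noncrossing [Preorder Mty] [Preorder Wty] (M : Finset (Mty × Wty)) : Prop :=
  ∀ p ∈ M, ∀ q ∈ M, ¬ Crossing p q

/-- `(m, w)` is a (weak) blocking pair for `M`: an acceptable pair not in `M`
such that `m` strictly prefers `w` to his partner in `M` (or is single) and
`w` strictly prefers `m` to her partner in `M` (or is single). -/
def Blocks (I : SMTI Mty Wty) (M : Finset (Mty × Wty)) (m : Mty) (w : Wty) : Prop :=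
  I.Acc m w ∧ (m, w) ∉ M ∧
  (∀ w', (m, w') ∈ M → rk (I.mpref m w) < rk (I.mpref m w')) ∧
  (∀ m', (m', w) ∈ M → rk (I.wpref w m) < rk (I.wpref w m'))

/-- A noncrossing (weak) blocking pair: a blocking pair crossing no pair of `M`. -/
def NCBlocks [Preorder Mty] [Preorder Wty] (I : SMTI Mty Wty) (M : Finset (Mty × Wty))
    (m : Mty) (w : Wty) : Prop :=
  I.Blocks M m w ∧ ∀ q ∈ M, ¬ Crossing (m, w) q

/-- A strongly stable noncrossing matching (for SMTI in the weak-stability sense: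
a weak-SSNM): a noncrossing matching admitting no (weak) blocking pair at all. -/
def IsSSNM [Preorder Mty] [Preorder Wty] (I : SMTI Mty Wty) (M : Finset (Mty × Wty)) : Prop :=
  I.IsMatching M ∧ Noncrossing M ∧ ∀ m w, ¬ I.Blocks M m w

/-- A weakly stable noncrossing matching: a noncrossing matching admitting
no noncrossing (weak) blocking pair. -/
def IsWSNM [Preorder Mty] [Preorder Wty] (I : SMTI Mty Wty) (M : Finset (Mty × Wty)) : Prop :=
  I.IsMatching M ∧ Noncrossing M ∧ ∀ m w, ¬ I.NCBlocks M m w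

/-- The instance has strict preference lists (no ties), i.e. it is an SMI instance. -/
def NoTies (I : SMTI Mty Wty) : Prop :=
  (∀ m w w', (I.mpref m w).isSome → I.mpref m w = I.mpref m w' → w = w') ∧
  (∀ w m m', (I.wpref w m).isSome → I.wpref w m = I.wpref w m' → m = m')

end SMTI

/-- `m` is a first choice of `w`: `(m, w)` is acceptable and `w` weakly prefers `m`
to every man on her list.  `E_I` is the set of pairs satisfying this. -/
def FirstChoice {Mty Wty : Type} (I : SMTI Mty Wty) (m : Mty) (w : Wty) : Prop :=
  I.Acc m w ∧ ∀ m', (I.wpref w m').isSome → SMTI.rk (I.wpref w m) ≤ SMTI.rk (I.wpref w m')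

/-- One step of the greedy procedure: process woman `i`.  If her list is nonempty,
add `(m_{j*}, w_i)` for the smallest `j` with `(m_j, w_i) ∈ E_I` such that the current
set stays a noncrossing matching; fail (`none`) if no such `j` exists. -/
noncomputable def greedyStep {n : ℕ} (I : SMTI (Fin n) (Fin n))
    (M : Finset (Fin n × Fin n)) (i : Fin n) : Option (Finset (Fin n × Fin n)) :=
  if ∃ m, (I.wpref i m).isSome then
    if hF : (Finset.univ.filter (fun j : Fin n =>
        FirstChoice I j i ∧ I.IsMatching (insert (j, i) M) ∧
          SMTI.Noncrossing (insert (j, i) M))).Nonempty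
    then some (insert ((Finset.univ.filter (fun j : Fin n =>
        FirstChoice I j i ∧ I.IsMatching (insert (j, i) M) ∧
          SMTI.Noncrossing (insert (j, i) M))).min' hF, i) M)
    else none
  else some M

/-- The greedy procedure run on the first `k` women (in top-to-bottom order),
starting from the empty matching; `none` means it failed. -/
noncomputable def greedyUpTo {n : ℕ} (I : SMTI (Fin n) (Fin n)) (k : ℕ) :
    Option (Finset (Fin n × Fin n)) :=
  ((List.finRange n).take k).foldl (fun acc i => acc.bind fun M => greedyStep I M i) (some ∅)

/-- The full greedy procedure, processing all `n` women. -/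
noncomputable def greedyRun {n : ℕ} (I : SMTI (Fin n) (Fin n)) :
    Option (Finset (Fin n × Fin n)) :=
  greedyUpTo I n

namespace Stmt8Aux
variable {n : ℕ} (I : SMTI (Fin n) (Fin n))

noncomputable def Filt (M : Finset (Fin n × Fin n)) (i : Fin n) : Finset (Fin n) :=
  Finset.univ.filter (fun j : Fin n =>
        FirstChoice I j i ∧ I.IsMatching (insert (j, i) M) ∧
          SMTI.Noncrossing (insert (j, i) M))

lemma foldl_none (l : List (Fin n)) :
    l.foldl (fun acc i => acc.bind fun M => greedyStep I M i) none = none := by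
  induction l with
  | nil => rfl
  | cons a l ih => simpa using ih

lemma greedyUpTo_succ (t : ℕ) (ht : t < n) :
    greedyUpTo I (t+1) = (greedyUpTo I t).bind (fun M => greedyStep I M ⟨t, ht⟩) := by
  unfold greedyUpTo
  rw [List.take_succ, List.foldl_append]
  have hg : (List.finRange n)[t]? = some ⟨t, ht⟩ := by
    simp [List.getElem?_eq_getElem, ht]
  rw [hg]
  cases h : ((List.finRange n).take t).foldl
      (fun acc i => acc.bind fun M => greedyStep I M i) (some ∅) with
  | none => simp [foldl_none]
  | some M => simp

lemma greedyUpTo_clamp (t : ℕ) (ht : n ≤ t) : greedyUpTo I t = greedyUpTo I n := by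
  unfold greedyUpTo
  rw [List.take_of_length_le (by simpa using ht), List.take_of_length_le (by simp)]

lemma greedyStep_some {M M' : Finset (Fin n × Fin n)} {i : Fin n}
    (h : greedyStep I M i = some M') :
    (M' = M ∧ ∀ m, ¬ (I.wpref i m).isSome) ∨
    ∃ hF : (Filt I M i).Nonempty, M' = insert ((Filt I M i).min' hF, i) M := by
  unfold greedyStep at h
  split at h
  · split at h
    · right; exact ⟨by assumption, by injection h; subst M'; rfl⟩
    · exact absurd h (by simp)
  · left
    refine ⟨by injection h; subst M'; rfl, ?_⟩
    intro m hm
    exact (by assumption : ¬ ∃ m, (I.wpref i m).isSome) ⟨m, hm⟩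

lemma greedyUpTo_inv {t : ℕ} {M : Finset (Fin n × Fin n)}
    (h : greedyUpTo I t = some M) :
    I.IsMatching M ∧ SMTI.Noncrossing M ∧ ∀ p ∈ M, (p.2 : ℕ) < t := by
  induction t generalizing M with
  | zero =>
    have : M = ∅ := by simpa [greedyUpTo] using h.symm
    subst this
    refine ⟨⟨by simp, by simp⟩, by simp [SMTI.Noncrossing], by simp⟩
  | succ t ih =>
    rcases lt_or_ge t n with ht | ht
    · rw [greedyUpTo_succ I t ht] at h
      cases hM0 : greedyUpTo I t with
      | none => rw [hM0] at h; cases h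
      | some M0 =>
        rw [hM0] at h; simp only [Option.bind_some] at h
        obtain ⟨hmatch0, hnc0, hlt0⟩ := ih hM0
        rcases greedyStep_some I h with ⟨rfl, -⟩ | ⟨hF, rfl⟩
        · exact ⟨hmatch0, hnc0, fun p hp => Nat.lt_succ_of_lt (hlt0 p hp)⟩
        · have hmem := (Filt I M0 ⟨t, ht⟩).min'_mem hF
          simp only [Filt, Finset.mem_filter] at hmem
          refine ⟨hmem.2.2.1, hmem.2.2.2, ?_⟩
          intro p hp
          rcases Finset.mem_insert.mp hp with rfl | hp
          · simp
          · exact Nat.lt_succ_of_lt (hlt0 p hp)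
    · rw [greedyUpTo_clamp I (t+1) (le_trans ht (Nat.le_succ t)),
        ← greedyUpTo_clamp I t ht] at h
      obtain ⟨h1, h2, h3⟩ := ih h
      exact ⟨h1, h2, fun p hp => Nat.lt_succ_of_lt (h3 p hp)⟩

lemma greedyUpTo_mono {t t' : ℕ} (h : t ≤ t') {M' : Finset (Fin n × Fin n)}
    (h' : greedyUpTo I t' = some M') :
    ∃ M, greedyUpTo I t = some M ∧ M ⊆ M' := by
  induction t' generalizing M' with
  | zero =>
    interval_cases t
    exact ⟨M', h', Finset.Subset.refl _⟩
  | succ t' ih =>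
    rcases Nat.eq_or_lt_of_le h with rfl | hlt
    · exact ⟨M', h', Finset.Subset.refl _⟩
    · have ht : t ≤ t' := Nat.lt_succ_iff.mp hlt
      rcases lt_or_ge t' n with ht' | ht'
      · rw [greedyUpTo_succ I t' ht'] at h'
        cases hM0 : greedyUpTo I t' with
        | none => rw [hM0] at h'; cases h'
        | some M0 =>
          rw [hM0] at h'; simp only [Option.bind_some] at h'
          obtain ⟨M, hM, hsub⟩ := ih ht hM0
          refine ⟨M, hM, hsub.trans ?_⟩
          rcases greedyStep_some I h' with ⟨rfl, -⟩ | ⟨hF, rfl⟩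
          · exact Finset.Subset.refl _
          · exact Finset.subset_insert _ _
      · rw [greedyUpTo_clamp I (t'+1) (le_trans ht' (Nat.le_succ t')),
          ← greedyUpTo_clamp I t' ht'] at h'
        exact ih ht h'

lemma greedy_woman (i : Fin n) {t' : ℕ} (hik : (i : ℕ) < t')
    {M' : Finset (Fin n × Fin n)} (h' : greedyUpTo I t' = some M')
    (hne : ∃ m, (I.wpref i m).isSome) :
    ∃ M, greedyUpTo I (i : ℕ) = some M ∧
      ∃ hF : (Filt I M i).Nonempty, ((Filt I M i).min' hF, i) ∈ M' := by
  have hle1 : (i : ℕ) + 1 ≤ t' := hik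
  obtain ⟨M1, hM1, hsub1⟩ := greedyUpTo_mono I hle1 h'
  rw [greedyUpTo_succ I (i : ℕ) i.isLt] at hM1
  cases hM0 : greedyUpTo I (i : ℕ) with
  | none => rw [hM0] at hM1; cases hM1
  | some M0 =>
    rw [hM0] at hM1; simp only [Option.bind_some] at hM1
    have hi : (⟨(i : ℕ), i.isLt⟩ : Fin n) = i := Fin.eta i i.isLt
    rw [hi] at hM1
    rcases greedyStep_some I hM1 with ⟨rfl, hempty⟩ | ⟨hF, rfl⟩
    · obtain ⟨m, hm⟩ := hne; exact absurd hm (hempty m)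
    · exact ⟨M0, rfl, hF, hsub1 (Finset.mem_insert_self _ _)⟩

lemma crossing_comm {p q : Fin n × Fin n} (h : SMTI.Crossing p q) : SMTI.Crossing q p :=
  h.symm

end Stmt8Aux

open Stmt8Aux in
/-- let `M*` be a weak-SSNM of an SMTI instance in which each man's list
has at most one woman, and suppose the greedy procedure has successfully processed the
first `k − 1` women, producing `M̄`.  Then for each of these women `w_i`: she is single
in `M*` iff she is single in `M̄`, and if `M*(w_i) = m_p` and `M̄(w_i) = m_q` then `q ≤ p`. -/
theorem stmt8 {n : ℕ} (I : SMTI (Fin n) (Fin n))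
    (hone : ∀ m w w', (I.mpref m w).isSome → (I.mpref m w').isSome → w = w')
    (Mstar : Finset (Fin n × Fin n)) (hMstar : I.IsSSNM Mstar)
    (k : ℕ) (Mbar : Finset (Fin n × Fin n))
    (hbar : greedyUpTo I (k - 1) = some Mbar) :
    ∀ i : Fin n, (i : ℕ) < k - 1 →
      ((∃ m, (m, i) ∈ Mstar) ↔ (∃ m, (m, i) ∈ Mbar)) ∧
      (∀ p q : Fin n, (p, i) ∈ Mstar → (q, i) ∈ Mbar → q ≤ p) := by
  obtain ⟨hMstarMatch, hMstarNC, hMstarStable⟩ := hMstar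
  obtain ⟨hbarMatch, hbarNC, -⟩ := greedyUpTo_inv I hbar
  suffices H : ∀ v : ℕ, ∀ i : Fin n, (i : ℕ) = v → (i : ℕ) < k - 1 →
      ((∃ m, (m, i) ∈ Mstar) ↔ (∃ m, (m, i) ∈ Mbar)) ∧
      (∀ p q : Fin n, (p, i) ∈ Mstar → (q, i) ∈ Mbar → q ≤ p) by
    exact fun i hik => H i i rfl hik
  intro v
  induction v using Nat.strong_induction_on with
  | _ v IH =>
  rintro i rfl hik
  by_cases hne : ∃ m, (I.wpref i m).isSome
  · obtain ⟨M0, hM0, hF, hmin⟩ := greedy_woman I i hik hbar hne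
    set q0 := (Filt I M0 i).min' hF with hq0def
    have hq0mem : q0 ∈ Filt I M0 i := Finset.min'_mem _ hF
    simp only [Filt, Finset.mem_filter] at hq0mem
    obtain ⟨-, hq0fc, hq0m, hq0nc⟩ := hq0mem
    obtain ⟨hM0Match, hM0NC, hM0lt⟩ := greedyUpTo_inv I hM0
    have hM0sub : M0 ⊆ Mbar := by
      obtain ⟨M0', hM0', hsub⟩ := greedyUpTo_mono I (le_of_lt hik) hbar
      rw [hM0] at hM0'
      rw [Option.some.inj hM0']
      exact hsub
    have hstar : ∃ m, (m, i) ∈ Mstar := by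
      by_contra hsingle
      push_neg at hsingle
      apply hMstarStable q0 i
      refine ⟨hq0fc.1, hsingle q0, ?_, ?_⟩
      · intro w' hw'
        exfalso
        have hwi : w' = i := hone q0 w' i (hMstarMatch.1 _ hw').1 hq0fc.1.1
        exact hsingle q0 (hwi ▸ hw')
      · intro m' hm'
        exact absurd hm' (hsingle m')
    refine ⟨⟨fun _ => ⟨q0, hmin⟩, fun _ => hstar⟩, ?_⟩
    intro p q hp hq
    have hqq0 : q = q0 :=
      congrArg Prod.fst (hbarMatch.2 (q, i) hq (q0, i) hmin (Or.inr rfl))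
    subst hqq0
    by_cases hpq : p = q0
    · exact le_of_eq hpq.symm
    have hAccp : I.Acc p i := hMstarMatch.1 _ hp
    have hfcp : FirstChoice I p i := by
      refine ⟨hAccp, ?_⟩
      intro m' hm'
      refine le_trans ?_ (hq0fc.2 m' hm')
      by_contra hlt
      push_neg at hlt
      apply hMstarStable q0 i
      refine ⟨hq0fc.1, ?_, ?_, ?_⟩
      · intro hmem
        exact hpq (congrArg Prod.fst (hMstarMatch.2 (p, i) hp (q0, i) hmem (Or.inr rfl)))
      · intro w' hw'
        exfalso
        have hwi : w' = i := hone q0 w' i (hMstarMatch.1 _ hw').1 hq0fc.1.1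
        subst hwi
        exact hpq (congrArg Prod.fst (hMstarMatch.2 (p, w') hp (q0, w') hw' (Or.inr rfl)))
      · intro m'' hm''
        have hmp : m'' = p :=
          congrArg Prod.fst (hMstarMatch.2 (m'', i) hm'' (p, i) hp (Or.inr rfl))
        subst hmp
        exact hlt
    have hnoshare : ∀ qr ∈ M0, ¬ (qr.1 = p ∨ qr.2 = i) := by
      intro qr hqr hsh
      rcases hsh with h1 | h2
      · have hAccq : I.Acc qr.1 qr.2 := hM0Match.1 qr hqr
        have : qr.2 = i := hone qr.1 qr.2 i hAccq.1 (h1 ▸ hAccp.1)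
        exact absurd (this ▸ hM0lt qr hqr) (lt_irrefl _)
      · exact absurd (h2 ▸ hM0lt qr hqr) (lt_irrefl _)
    have hMatchIns : I.IsMatching (insert (p, i) M0) := by
      constructor
      · intro pr hpr
        rcases Finset.mem_insert.mp hpr with rfl | hpr
        · exact hAccp
        · exact hM0Match.1 pr hpr
      · intro pr hpr qr hqr hshare
        rcases Finset.mem_insert.mp hpr with rfl | hpr <;>
          rcases Finset.mem_insert.mp hqr with rfl | hqr
        · rfl
        · exact absurd hshare (by
            have h := hnoshare qr hqr
            simp only [not_or] at h ⊢
            exact ⟨fun hh => h.1 hh.symm, fun hh => h.2 hh.symm⟩)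
        · exact absurd hshare (hnoshare pr hpr)
        · exact hM0Match.2 pr hpr qr hqr hshare
    have hkey : ∀ pr ∈ M0, ¬ SMTI.Crossing (p, i) pr := by
      intro pr hpr hcross
      have hwlt : (pr.2 : ℕ) < (i : ℕ) := hM0lt pr hpr
      rcases hcross with ⟨h1, h2⟩ | ⟨h1, h2⟩
      · have hprbar : (pr.1, pr.2) ∈ Mbar := by
          rw [Prod.mk.eta]; exact hM0sub hpr
        have hw : (pr.2 : ℕ) < k - 1 := lt_trans hwlt hik
        obtain ⟨hiff, hle⟩ := IH (pr.2 : ℕ) hwlt pr.2 rfl hw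
        obtain ⟨ms, hms⟩ := hiff.mpr ⟨pr.1, hprbar⟩
        have hle' : pr.1 ≤ ms := hle ms pr.1 hms hprbar
        have hnc := hMstarNC (p, i) hp (ms, pr.2) hms
        have hms_le_p : ms ≤ p := by
          by_contra hc
          push_neg at hc
          exact hnc (Or.inl ⟨hc, Fin.lt_def.mpr hwlt⟩)
        exact absurd h1 (not_lt.mpr (le_trans hle' hms_le_p))
      · exact absurd h2 (not_lt.mpr (le_of_lt (Fin.lt_def.mpr hwlt)))
    have hNCIns : SMTI.Noncrossing (insert (p, i) M0) := by
      intro pr hpr qr hqr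
      rcases Finset.mem_insert.mp hpr with rfl | hpr <;>
        rcases Finset.mem_insert.mp hqr with rfl | hqr
      · rintro (⟨h1, -⟩ | ⟨h1, -⟩) <;> exact absurd h1 (lt_irrefl _)
      · exact hkey qr hqr
      · exact fun hc => hkey pr hpr (crossing_comm hc)
      · exact hM0NC pr hpr qr hqr
    have hpF : p ∈ Filt I M0 i := by
      simp only [Filt, Finset.mem_filter]
      exact ⟨Finset.mem_univ p, hfcp, hMatchIns, hNCIns⟩
    exact Finset.min'_le _ p hpF
  · push_neg at hne
    have hnostar : ∀ m, (m, i) ∉ Mstar := by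
      intro m hm
      exact absurd (hMstarMatch.1 _ hm).2 (by simpa using hne m)
    have hnobar : ∀ m, (m, i) ∉ Mbar := by
      intro m hm
      exact absurd (hbarMatch.1 _ hm).2 (by simpa using hne m)
    refine ⟨⟨fun ⟨m, hm⟩ => absurd hm (hnostar m), fun ⟨m, hm⟩ => absurd hm (hnobar m)⟩, ?_⟩
    intro p q hp _
    exact absurd hp (hnostar p)
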